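/- For real ε and h > 0, the 2×2 matrix T(ε) = e^{−iπ/4} ℰ(ε) · [[1, i e^{−επ}], [i e^{−επ}, 1]], where ℰ(ε) = (2π)^{−1/2} Γ(½+iε) e^{ε(π/2 + i ln h)}, is unitary. -/

import Mathlib

open Complex Real Matrix

/-- ℰ(ε) = (2π)^{−1/2} Γ(½+iε) e^{ε(π/2 + i ln h)}. -/
noncomputable def scrE (h ε : ℝ) : ℂ :=
  (((2 * Real.pi) ^ (-(1 : ℝ) / 2) : ℝ) : ℂ) *
    Complex.Gamma (1 / 2 + ε * Complex.I) *
    Complex.exp (ε * ((Real.pi / 2 : ℝ) + Complex.I * (Real.log h : ℝ)))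

/-- T(ε) = e^{−iπ/4} ℰ(ε) [[1, i e^{−επ}], [i e^{−επ}, 1]]. -/
noncomputable def Tmat (h ε : ℝ) : Matrix (Fin 2) (Fin 2) ℂ :=
  Complex.exp (-(Real.pi / 4 : ℝ) * Complex.I) • scrE h ε •
    !![1, Complex.I * (Real.exp (-ε * Real.pi) : ℝ);
       Complex.I * (Real.exp (-ε * Real.pi) : ℝ), 1]

lemma gamma_sq (ε : ℝ) :
    (starRingEnd ℂ) (Complex.Gamma (1 / 2 + ε * Complex.I)) *
      Complex.Gamma (1 / 2 + ε * Complex.I) =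
      (Real.pi : ℂ) / Real.cosh (Real.pi * ε) := by
  have h1 : (starRingEnd ℂ) (Complex.Gamma (1 / 2 + ε * Complex.I))
      = Complex.Gamma (1 - (1 / 2 + ε * Complex.I)) := by
    rw [← Complex.Gamma_conj]
    congr 1
    simp only [map_add, _root_.map_mul, Complex.conj_ofReal, Complex.conj_I, map_div₀,
      _root_.map_one, map_ofNat]
    ring
  rw [h1, mul_comm, Complex.Gamma_mul_Gamma_one_sub]
  have h2 : (Real.pi : ℂ) * (1 / 2 + ε * Complex.I)
      = (Real.pi / 2 : ℝ) + ((Real.pi * ε : ℝ) : ℂ) * Complex.I := by push_cast; ring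
  rw [h2, Complex.sin_add, Complex.sin_mul_I, Complex.cos_mul_I]
  norm_cast
  simp [Complex.ofReal_cosh]

lemma scrE_sq (h ε : ℝ) :
    (starRingEnd ℂ) (scrE h ε) * scrE h ε *
      (1 + ((Real.exp (-ε * Real.pi) : ℝ) : ℂ) ^ 2) = 1 := by
  have hexp : (starRingEnd ℂ) (Complex.exp (ε * ((Real.pi / 2 : ℝ) + Complex.I * (Real.log h : ℝ))))
      * Complex.exp (ε * ((Real.pi / 2 : ℝ) + Complex.I * (Real.log h : ℝ)))
      = ((Real.exp (ε * Real.pi) : ℝ) : ℂ) := by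
    rw [← Complex.exp_conj, ← Complex.exp_add, Complex.ofReal_exp]
    congr 1
    simp only [_root_.map_mul, map_add, Complex.conj_ofReal, Complex.conj_I]
    push_cast
    ring
  have hr : (((2 * Real.pi) ^ (-(1 : ℝ) / 2) : ℝ) : ℂ) *
      (((2 * Real.pi) ^ (-(1 : ℝ) / 2) : ℝ) : ℂ) = (((2 * Real.pi)⁻¹ : ℝ) : ℂ) := by
    rw [← Complex.ofReal_mul, ← Real.rpow_add (by positivity),
      show (-(1:ℝ)/2 + -(1:ℝ)/2) = -1 by norm_num, Real.rpow_neg_one]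
  have key := gamma_sq ε
  simp only [scrE, _root_.map_mul, Complex.conj_ofReal]
  have expand : (((2 * Real.pi) ^ (-(1 : ℝ) / 2) : ℝ) : ℂ) *
      (starRingEnd ℂ) (Complex.Gamma (1 / 2 + ↑ε * Complex.I)) *
      (starRingEnd ℂ) (Complex.exp (↑ε * (↑(Real.pi / 2) + Complex.I * ↑(Real.log h)))) *
      ((((2 * Real.pi) ^ (-(1 : ℝ) / 2) : ℝ) : ℂ) *
        Complex.Gamma (1 / 2 + ↑ε * Complex.I) *
        Complex.exp (↑ε * (↑(Real.pi / 2) + Complex.I * ↑(Real.log h)))) *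
      (1 + ((Real.exp (-ε * Real.pi) : ℝ) : ℂ) ^ 2)
      = ((((2 * Real.pi) ^ (-(1 : ℝ) / 2) : ℝ) : ℂ) * (((2 * Real.pi) ^ (-(1 : ℝ) / 2) : ℝ) : ℂ)) *
        ((starRingEnd ℂ) (Complex.Gamma (1 / 2 + ↑ε * Complex.I)) *
          Complex.Gamma (1 / 2 + ↑ε * Complex.I)) *
        ((starRingEnd ℂ) (Complex.exp (↑ε * (↑(Real.pi / 2) + Complex.I * ↑(Real.log h)))) *
          Complex.exp (↑ε * (↑(Real.pi / 2) + Complex.I * ↑(Real.log h)))) *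
        (1 + ((Real.exp (-ε * Real.pi) : ℝ) : ℂ) ^ 2) := by ring
  rw [expand, hr, key, hexp]
  rw [Real.cosh_eq]
  push_cast
  have e1 : Complex.exp ((ε:ℂ) * Real.pi) * (1 + Complex.exp (-(ε:ℂ) * Real.pi) ^ 2)
      = Complex.exp ((Real.pi:ℂ) * ε) + Complex.exp (-((Real.pi:ℂ) * ε)) := by
    rw [mul_add, mul_one, sq, ← Complex.exp_add, ← Complex.exp_add]
    congr 1
    · congr 1; ring
    · congr 1; ring
  have hne : Complex.exp ((Real.pi:ℂ)*ε) + Complex.exp (-((Real.pi:ℂ)*ε)) ≠ 0 := by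
    have h2 : Complex.exp ((Real.pi:ℂ)*ε) + Complex.exp (-((Real.pi:ℂ)*ε))
        = ((Real.exp (Real.pi*ε) + Real.exp (-(Real.pi*ε)) : ℝ) : ℂ) := by
      push_cast; ring_nf
    rw [h2]
    exact_mod_cast (by positivity : (0:ℝ) < Real.exp (Real.pi*ε) + Real.exp (-(Real.pi*ε))).ne'
  have hπ : (Real.pi : ℂ) ≠ 0 := Complex.ofReal_ne_zero.mpr Real.pi_ne_zero
  simp only [neg_mul] at e1 ⊢
  field_simp
  linear_combination Complex.exp (-((Real.pi:ℂ)*ε)) *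
    (by rw [← Complex.exp_add, add_neg_cancel, Complex.exp_zero] :
      Complex.exp ((Real.pi:ℂ)*ε) * Complex.exp (-((Real.pi:ℂ)*ε)) = 1)

/-- For real ε and h > 0 the matrix T(ε) is unitary. -/
theorem stmt7 (h ε : ℝ) (hh : 0 < h) :
    Tmat h ε ∈ Matrix.unitaryGroup (Fin 2) ℂ := by
  rw [Matrix.mem_unitaryGroup_iff']
  have hph : (starRingEnd ℂ) (Complex.exp (-((Real.pi:ℂ)/4 * Complex.I))) *
      Complex.exp (-((Real.pi:ℂ)/4 * Complex.I)) = 1 := by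
    rw [← Complex.exp_conj, ← Complex.exp_add]
    simp only [map_neg, _root_.map_mul, map_div₀, Complex.conj_ofReal, Complex.conj_I,
      map_ofNat]
    ring_nf
    exact Complex.exp_zero
  have key := scrE_sq h ε
  push_cast at key
  have hc : (starRingEnd ℂ) (Complex.exp (-((ε:ℂ) * Real.pi))) =
      Complex.exp (-((ε:ℂ) * Real.pi)) := by
    rw [← Complex.exp_conj]
    congr 1
    simp only [map_neg, _root_.map_mul, Complex.conj_ofReal]
  simp only [neg_mul] at key
  have hI : Complex.I * Complex.I = -1 := Complex.I_mul_I
  ext i j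
  fin_cases i <;> fin_cases j <;>
    simp [Tmat, Matrix.mul_apply, Fin.sum_univ_two, Matrix.star_apply, Matrix.one_apply,
      Complex.conj_ofReal] <;>
    rw [hc] <;>
  first
    | linear_combination ((starRingEnd ℂ) (scrE h ε) * scrE h ε *
        (1 + Complex.exp (-((ε:ℂ) * Real.pi)) ^ 2)) * hph + key +
        (-((starRingEnd ℂ) (Complex.exp (-((Real.pi:ℂ)/4 * Complex.I))) *
           Complex.exp (-((Real.pi:ℂ)/4 * Complex.I)) *
           ((starRingEnd ℂ) (scrE h ε) * scrE h ε) *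
           Complex.exp (-((ε:ℂ) * Real.pi)) ^ 2)) * hI
    | ring
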